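/- Let H(x) = −γx/3 for x ≥ 1/2, H(x) = −(γ/24)(3−4x+12x²) for 0 ≤ x ≤ 1/2, H(x) = −(γ/24)(3+4x+12x²) for −1/2 ≤ x ≤ 0, H(x) = γx/3 for x ≤ −1/2. There exists γ₀ > 0 such that for all γ ≥ γ₀ the following holds. Suppose f : ℝ×[0,∞) → [0,1] is such that for each t ≥ 0 the function f(·,t) is even and nonincreasing in |x|, the weighted integral ∫_ℝ f(x,t)e^{H(x)}dx is independent of t, and f(x,0) ≥ 1 for |x| ≤ 13/60. Then f(x,t) ≥ 1/2 for all t ≥ 0 and all |x| ≤ 11/60. -/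

import Mathlib

open MeasureTheory

/-- The "weakest" piecewise drift potential `H`. -/
noncomputable def Hpot (γ : ℝ) (x : ℝ) : ℝ :=
  if 1/2 ≤ x then -(γ * x / 3)
  else if 0 ≤ x then -(γ / 24) * (3 - 4 * x + 12 * x^2)
  else if -(1/2) ≤ x then -(γ / 24) * (3 + 4 * x + 12 * x^2)
  else γ * x / 3

open Set Real

lemma Hpot_even (γ x : ℝ) : Hpot γ (-x) = Hpot γ x := by
  unfold Hpot
  split_ifs <;>
    first
      | ring1
      | (exfalso; linarith)
      | (have hx : x = 1/2 := by linarith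
         subst hx; ring1)
      | (have hx : x = -(1/2) := by linarith
         subst hx; ring1)
      | (have hx : x = 0 := by linarith
         subst hx; ring1)

lemma measurable_Hpot (γ : ℝ) : Measurable (Hpot γ) := by
  unfold Hpot
  refine Measurable.ite (measurableSet_le measurable_const measurable_id) (by fun_prop) ?_
  refine Measurable.ite (measurableSet_le measurable_const measurable_id) (by fun_prop) ?_
  exact Measurable.ite (measurableSet_le measurable_const measurable_id) (by fun_prop) (by fun_prop)

lemma Hpot_le_lin {γ : ℝ} (hγ : 0 ≤ γ) (x : ℝ) : Hpot γ x ≤ γ/6 - γ/3 * |x| := by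
  unfold Hpot
  rcases abs_cases x with ⟨h, h0⟩ | ⟨h, h0⟩ <;> rw [h] <;> split_ifs <;>
    first
      | linarith
      | nlinarith [mul_nonneg hγ (sq_nonneg (x - 1/2)), mul_nonneg hγ (sq_nonneg (x + 1/2)),
          mul_nonneg hγ (sq_nonneg x)]

lemma integrableOn_exp_Hpot_Ioi {γ : ℝ} (hγ : 0 < γ) (c : ℝ) :
    IntegrableOn (fun x => Real.exp (Hpot γ x)) (Ioi c) := by
  refine Integrable.mono'
      (((exp_neg_integrableOn_Ioi c (by positivity : (0:ℝ) < γ/3)).const_mul (Real.exp (γ/6))))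
      ((measurable_Hpot γ).exp.aestronglyMeasurable.restrict) ?_
  filter_upwards [ae_restrict_mem measurableSet_Ioi] with x hx
  rw [Real.norm_eq_abs, abs_of_pos (Real.exp_pos _), ← Real.exp_add]
  apply Real.exp_le_exp.2
  have h := Hpot_le_lin hγ.le x
  have : γ/3 * x ≤ γ/3 * |x| := by
    have := le_abs_self x
    nlinarith
  linarith

lemma integrable_exp_Hpot {γ : ℝ} (hγ : 0 < γ) :
    Integrable (fun x => Real.exp (Hpot γ x)) := by
  have hIoi := integrableOn_exp_Hpot_Ioi hγ 0
  have hIic : IntegrableOn (fun x => Real.exp (Hpot γ x)) (Iic 0) := by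
    rw [← Measure.map_neg_eq_self (volume : Measure ℝ)]
    have m : MeasurableEmbedding fun x : ℝ => -x :=
      (Homeomorph.neg ℝ).measurableEmbedding
    rw [m.integrableOn_map_iff]
    simp_rw [Function.comp_def, Hpot_even, Set.neg_preimage, Set.neg_Iic, neg_zero]
    exact (integrableOn_Ici_iff_integrableOn_Ioi (hb := enorm_ne_top)).mpr hIoi
  have h := hIic.union hIoi
  rwa [Set.Iic_union_Ioi, integrableOn_univ] at h

lemma Hpot_lb {γ x : ℝ} (hγ : 0 ≤ γ) (h1 : 11/60 ≤ x) (h2 : x ≤ 13/60) :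
    -(809/7200) * γ ≤ Hpot γ x := by
  unfold Hpot
  rw [if_neg (by linarith), if_pos (by linarith)]
  nlinarith [mul_nonneg hγ (mul_nonneg (by linarith : (0:ℝ) ≤ x - 7/60)
    (by linarith : (0:ℝ) ≤ 13/60 - x))]

lemma Hpot_tail {γ x : ℝ} (hγ : 0 ≤ γ) (h : 13/60 ≤ x) :
    Hpot γ x ≤ (-(809/7200) * γ + γ/20 * (13/60)) - γ/20 * x := by
  unfold Hpot
  split_ifs with h1 h2
  · nlinarith [mul_nonneg hγ (by linarith : (0:ℝ) ≤ x - 1/2)]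
  · nlinarith [mul_nonneg hγ (sq_nonneg (x - 13/60))]
  · linarith
  · linarith

/-- the mass-trapping estimate: conservation of `∫ f e^H dx`
forces `f ≥ 1/2` on `[-11/60, 11/60]` for all times, for large `γ`. -/
theorem mass_trapping :
    ∃ γ₀ : ℝ, 0 < γ₀ ∧
      ∀ (γ : ℝ), γ₀ ≤ γ →
      ∀ f : ℝ → ℝ → ℝ,
        -- f takes values in [0,1]
        (∀ x t : ℝ, 0 ≤ t → 0 ≤ f x t ∧ f x t ≤ 1) →
        -- f(·,t) is even and nonincreasing in |x|
        (∀ x t : ℝ, 0 ≤ t → f (-x) t = f x t) →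
        (∀ x y t : ℝ, 0 ≤ t → |x| ≤ |y| → f y t ≤ f x t) →
        -- the weighted integral ∫ f(x,t)e^{H(x)}dx is independent of t
        (∀ t : ℝ, 0 ≤ t → Integrable (fun x => f x t * Real.exp (Hpot γ x))) →
        (∀ t : ℝ, 0 ≤ t →
          (∫ x : ℝ, f x t * Real.exp (Hpot γ x)) =
            ∫ x : ℝ, f x 0 * Real.exp (Hpot γ x)) →
        -- initial lower bound
        (∀ x : ℝ, |x| ≤ 13/60 → 1 ≤ f x 0) →
        -- conclusion
        ∀ t x : ℝ, 0 ≤ t → |x| ≤ 11/60 → 1/2 ≤ f x t := by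
  refine ⟨1201, by norm_num, ?_⟩
  intro γ hγ f hf01 _hfeven hfmono hfint hfcons hf0 t x₀ ht hx₀
  by_contra hcon
  push_neg at hcon
  have hγ0 : (0:ℝ) < γ := by linarith
  set E : ℝ → ℝ := fun x => Real.exp (Hpot γ x) with hE
  have hEpos : ∀ x, 0 < E x := fun x => Real.exp_pos _
  have hEmeas : Measurable E := (measurable_Hpot γ).exp
  have hEint : Integrable E := integrable_exp_Hpot hγ0
  set s : Set ℝ := Ioo (-(11/60) : ℝ) (11/60) with hsdef
  have hs : MeasurableSet s := measurableSet_Ioo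
  -- the comparison function g for step 1
  set g : ℝ → ℝ := fun y => if y ∈ s then E y else E y / 2 with hgdef
  have hgmeas : Measurable g := Measurable.ite hs hEmeas (hEmeas.div_const 2)
  have hgint : Integrable g := by
    refine Integrable.mono' hEint hgmeas.aestronglyMeasurable ?_
    filter_upwards with y
    rw [Real.norm_eq_abs]
    by_cases hy : y ∈ s
    · rw [hgdef]; simp only [if_pos hy]
      exact le_of_eq (abs_of_pos (hEpos y))
    · rw [hgdef]; simp only [if_neg hy]
      rw [abs_of_pos (by positivity)]
      linarith [hEpos y]
  -- Step 1 : ∫ f(·,t) E ≤ ∫_s E + (1/2) ∫_{sᶜ} E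
  have h1 : (∫ y : ℝ, f y t * E y) ≤ (∫ y in s, E y) + (∫ y in sᶜ, E y) / 2 := by
    have hfg : ∀ y, f y t * E y ≤ g y := by
      intro y
      by_cases hy : y ∈ s
      · rw [hgdef]; simp only [if_pos hy]
        calc f y t * E y ≤ 1 * E y :=
              mul_le_mul_of_nonneg_right (hf01 y t ht).2 (hEpos y).le
          _ = E y := one_mul _
      · rw [hgdef]; simp only [if_neg hy]
        have habs : (11:ℝ)/60 ≤ |y| := by
          by_contra hc
          push_neg at hc
          exact hy (by rw [hsdef, Set.mem_Ioo]; constructor <;> [linarith [neg_abs_le y]; linarith [le_abs_self y]])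
        have hle : f y t ≤ f x₀ t := hfmono x₀ y t ht (le_trans hx₀ habs)
        have : f y t * E y ≤ (1/2) * E y :=
          mul_le_mul_of_nonneg_right (by linarith) (hEpos y).le
        linarith
    have hmono := integral_mono (hfint t ht) hgint hfg
    have hsplit : (∫ y : ℝ, g y) = (∫ y in s, g y) + ∫ y in sᶜ, g y :=
      (integral_add_compl hs hgint).symm
    have hgs : (∫ y in s, g y) = ∫ y in s, E y :=
      setIntegral_congr_fun hs (fun y hy => by rw [hgdef]; simp only [if_pos hy])
    have hgsc : (∫ y in sᶜ, g y) = ∫ y in sᶜ, E y / 2 :=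
      setIntegral_congr_fun hs.compl
        (fun y hy => by rw [hgdef]; simp only [if_neg (Set.notMem_of_mem_compl hy)])
    have hdiv : (∫ y in sᶜ, E y / 2) = (∫ y in sᶜ, E y) / 2 := integral_div 2 _
    calc (∫ y : ℝ, f y t * E y) ≤ ∫ y : ℝ, g y := hmono
      _ = (∫ y in s, E y) + (∫ y in sᶜ, E y) / 2 := by rw [hsplit, hgs, hgsc, hdiv]
  -- Step 2 : ∫_{Icc(-b) b} E ≤ ∫ f(·,0) E
  have h2 : (∫ y in Icc (-(13/60) : ℝ) (13/60), E y) ≤ ∫ y : ℝ, f y 0 * E y := by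
    have hi : Integrable (Set.indicator (Icc (-(13/60) : ℝ) (13/60)) E) :=
      hEint.indicator measurableSet_Icc
    have hptw : ∀ y, Set.indicator (Icc (-(13/60) : ℝ) (13/60)) E y ≤ f y 0 * E y := by
      intro y
      by_cases hy : y ∈ Icc (-(13/60) : ℝ) (13/60)
      · rw [Set.indicator_of_mem hy]
        have h1f : 1 ≤ f y 0 := hf0 y (abs_le.2 ⟨hy.1, hy.2⟩)
        calc E y = 1 * E y := (one_mul _).symm
          _ ≤ f y 0 * E y := mul_le_mul_of_nonneg_right h1f (hEpos y).le
      · rw [Set.indicator_of_notMem hy]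
        exact mul_nonneg (hf01 y 0 le_rfl).1 (hEpos y).le
    calc (∫ y in Icc (-(13/60) : ℝ) (13/60), E y)
        = ∫ y : ℝ, Set.indicator (Icc (-(13/60) : ℝ) (13/60)) E y :=
          (integral_indicator measurableSet_Icc).symm
      _ ≤ ∫ y : ℝ, f y 0 * E y := integral_mono hi (hfint 0 le_rfl) hptw
  -- Step 3 : split Icc(-b,b) = s ∪ (Icc \ s)
  have hsub : s ⊆ Icc (-(13/60) : ℝ) (13/60) := by
    intro y hy
    rw [hsdef, Set.mem_Ioo] at hy
    exact ⟨by linarith [hy.1], by linarith [hy.2]⟩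
  have h3 : (∫ y in Icc (-(13/60) : ℝ) (13/60), E y)
      = (∫ y in s, E y) + ∫ y in Icc (-(13/60) : ℝ) (13/60) \ s, E y := by
    rw [← setIntegral_union disjoint_sdiff_self_right (measurableSet_Icc.diff hs)
      hEint.integrableOn hEint.integrableOn, Set.union_diff_cancel hsub]
  -- Step 4 : split sᶜ = (Icc \ s) ∪ (sᶜ \ Icc)
  have h4 : (∫ y in sᶜ, E y)
      = (∫ y in Icc (-(13/60) : ℝ) (13/60) \ s, E y)
        + ∫ y in sᶜ \ Icc (-(13/60) : ℝ) (13/60), E y := by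
    have hU : Icc (-(13/60) : ℝ) (13/60) \ s ∪ (sᶜ \ Icc (-(13/60) : ℝ) (13/60)) = sᶜ := by
      ext y
      simp only [Set.mem_union, Set.mem_diff, Set.mem_compl_iff]
      constructor
      · rintro (⟨_, h⟩ | ⟨h, _⟩) <;> exact h
      · intro h
        by_cases hy : y ∈ Icc (-(13/60) : ℝ) (13/60)
        · exact Or.inl ⟨hy, h⟩
        · exact Or.inr ⟨h, hy⟩
    have hdisj : Disjoint (Icc (-(13/60) : ℝ) (13/60) \ s)
        (sᶜ \ Icc (-(13/60) : ℝ) (13/60)) :=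
      disjoint_compl_right.mono Set.diff_subset (fun y hy => hy.2)
    have h4' := setIntegral_union hdisj (hs.compl.diff measurableSet_Icc)
      (hEint.integrableOn (s := Icc (-(13/60) : ℝ) (13/60) \ s))
      (hEint.integrableOn (s := sᶜ \ Icc (-(13/60) : ℝ) (13/60)))
    rw [hU] at h4'
    exact h4'
  -- combine : ∫_{Icc \ s} E ≤ ∫_{sᶜ \ Icc} E
  have hDO : (∫ y in Icc (-(13/60) : ℝ) (13/60) \ s, E y)
      ≤ ∫ y in sᶜ \ Icc (-(13/60) : ℝ) (13/60), E y := by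
    have hc := hfcons t ht
    linarith [h1, h2, h3, h4, hc]
  -- lower the left side to ∫_{Icc a b} E, raise the right side to 2 ∫_{Ioi b} E
  have hnonneg : ∀ (u : Set ℝ), 0 ≤ᵐ[volume.restrict u] E :=
    fun u => Filter.Eventually.of_forall (fun y => (hEpos y).le)
  have hL1 : (∫ y in Icc (11/60 : ℝ) (13/60), E y)
      ≤ ∫ y in Icc (-(13/60) : ℝ) (13/60) \ s, E y := by
    refine setIntegral_mono_set hEint.integrableOn (hnonneg _) (HasSubset.Subset.eventuallyLE ?_)
    intro y hy
    rw [Set.mem_Icc] at hy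
    refine ⟨⟨by linarith [hy.1], hy.2⟩, ?_⟩
    rw [hsdef, Set.mem_Ioo]
    rintro ⟨_, h⟩
    linarith [hy.1]
  have hR1 : (∫ y in sᶜ \ Icc (-(13/60) : ℝ) (13/60), E y)
      ≤ ∫ y in Iic (-(13/60) : ℝ) ∪ Ioi (13/60 : ℝ), E y := by
    refine setIntegral_mono_set hEint.integrableOn (hnonneg _) (HasSubset.Subset.eventuallyLE ?_)
    intro y hy
    have hy2 := hy.2
    rw [Set.mem_Icc, not_and_or, not_le, not_le] at hy2
    rcases hy2 with h | h
    · exact Or.inl (le_of_lt h)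
    · exact Or.inr h
  have hR2 : (∫ y in Iic (-(13/60) : ℝ) ∪ Ioi (13/60 : ℝ), E y)
      = (∫ y in Iic (-(13/60) : ℝ), E y) + ∫ y in Ioi (13/60 : ℝ), E y :=
    setIntegral_union (Set.Iic_disjoint_Ioi (by norm_num)) measurableSet_Ioi
      hEint.integrableOn hEint.integrableOn
  have hR3 : (∫ y in Iic (-(13/60) : ℝ), E y) = ∫ y in Ioi (13/60 : ℝ), E y := by
    have hrefl := integral_comp_neg_Iic (-(13/60) : ℝ) E
    rw [neg_neg] at hrefl
    rw [← hrefl]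
    refine setIntegral_congr_fun measurableSet_Iic (fun y _ => ?_)
    rw [hE]
    simp only [Hpot_even]
  have key : (∫ y in Icc (11/60 : ℝ) (13/60), E y) ≤ 2 * ∫ y in Ioi (13/60 : ℝ), E y := by
    linarith [hL1, hDO, hR1, hR2, hR3]
  -- numeric lower bound for the middle integral
  have hL : Real.exp (-(809/7200) * γ) * (1/30) ≤ ∫ y in Icc (11/60 : ℝ) (13/60), E y := by
    have hb : ∀ y ∈ Icc (11/60 : ℝ) (13/60), Real.exp (-(809/7200) * γ) ≤ E y := by
      intro y hy
      exact Real.exp_le_exp.2 (Hpot_lb hγ0.le hy.1 hy.2)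
    have hv := setIntegral_ge_of_const_le (μ := volume) (c := Real.exp (-(809/7200) * γ))
      measurableSet_Icc (by rw [Real.volume_Icc]; exact ENNReal.ofReal_ne_top) hb
      hEint.integrableOn
    rw [Real.volume_real_Icc] at hv
    rw [show ((13:ℝ)/60 - 11/60) = 1/30 by norm_num] at hv
    rwa [max_eq_left (by norm_num), smul_eq_mul, mul_comm] at hv
  -- numeric upper bound for the tail integral
  have hT : (∫ y in Ioi (13/60 : ℝ), E y) ≤ Real.exp (-(809/7200) * γ) * (20/γ) := by
    have hK0 : IntegrableOn (fun y => Real.exp (-(γ/20) * y)) (Ioi (13/60 : ℝ)) :=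
      exp_neg_integrableOn_Ioi _ (by positivity : (0:ℝ) < γ/20)
    have hK : IntegrableOn
        (fun y => Real.exp (-(809/7200) * γ + γ/20 * (13/60)) * Real.exp (-(γ/20 * y)))
        (Ioi (13/60 : ℝ)) := by
      simpa only [neg_mul, IntegrableOn] using hK0.const_mul (Real.exp (-(809/7200) * γ + γ/20 * (13/60)))
    have hptw : ∀ y ∈ Ioi (13/60 : ℝ),
        E y ≤ Real.exp (-(809/7200) * γ + γ/20 * (13/60)) * Real.exp (-(γ/20 * y)) := by
      intro y hy
      rw [← Real.exp_add]
      refine Real.exp_le_exp.2 ?_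
      have := Hpot_tail hγ0.le (le_of_lt hy)
      linarith
    have hcomp : (∫ y in Ioi (13/60 : ℝ), Real.exp (-(γ/20 * y)))
        = (γ/20)⁻¹ * Real.exp (-(γ/20 * (13/60))) := by
      have := integral_comp_mul_left_Ioi (fun y => Real.exp (-y)) (13/60) (by positivity : (0:ℝ) < γ/20)
      rw [integral_exp_neg_Ioi] at this
      rw [this, smul_eq_mul]
    calc (∫ y in Ioi (13/60 : ℝ), E y)
        ≤ ∫ y in Ioi (13/60 : ℝ),
            Real.exp (-(809/7200) * γ + γ/20 * (13/60)) * Real.exp (-(γ/20 * y)) :=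
          setIntegral_mono_on hEint.integrableOn hK measurableSet_Ioi hptw
      _ = Real.exp (-(809/7200) * γ + γ/20 * (13/60))
            * ∫ y in Ioi (13/60 : ℝ), Real.exp (-(γ/20 * y)) := integral_const_mul _ _
      _ = (Real.exp (-(809/7200) * γ) * (20/γ))
            * (Real.exp (γ/20 * (13/60)) * Real.exp (-(γ/20 * (13/60)))) := by
          rw [hcomp, Real.exp_add, inv_div]
          ring
      _ = Real.exp (-(809/7200) * γ) * (20/γ) := by
          rw [← Real.exp_add, add_neg_cancel, Real.exp_zero, mul_one]
  -- final contradiction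
  have hexp : (0:ℝ) < Real.exp (-(809/7200) * γ) := Real.exp_pos _
  have hfin : Real.exp (-(809/7200) * γ) * (1/30)
      ≤ Real.exp (-(809/7200) * γ) * (40/γ) := by
    calc Real.exp (-(809/7200) * γ) * (1/30)
        ≤ ∫ y in Icc (11/60 : ℝ) (13/60), E y := hL
      _ ≤ 2 * ∫ y in Ioi (13/60 : ℝ), E y := key
      _ ≤ 2 * (Real.exp (-(809/7200) * γ) * (20/γ)) := by linarith [hT]
      _ = Real.exp (-(809/7200) * γ) * (40/γ) := by ring
  have h130 : (1:ℝ)/30 ≤ 40/γ := le_of_mul_le_mul_left hfin hexp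
  have : γ ≤ 1200 := by
    rw [div_le_div_iff₀ (by norm_num) hγ0] at h130
    linarith
  linarith
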